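/- arXiv:2006.09768 — 2 statements merged into one kernel-verified Lean document; each statement's English description precedes it below -/
import Mathlib

section
/- Let h : Ω × ℝⁿ → ℝ be measurable with respect to F ⊗ B(ℝⁿ) on a complete probability space (Ω, F, P), and let A ∈ F ⊗ B(ℝⁿ). Then the function g(ω) := sup { h(ω,x) : x ∈ ℝⁿ, (ω,x) ∈ A } is F-measurable. -/
open MeasureTheory
open Filter Topology Set
open scoped ENNReal NNReal


/-- Inner compact approximation of an analytic set by compacts, for a finite
Borel measure on Cantor space. -/
lemma analytic_capacitability (μ : Measure (ℕ → Bool)) [IsFiniteMeasure μ]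
    {f : (ℕ → ℕ) → (ℕ → Bool)} (hf : Continuous f) {ε : ℝ≥0∞} (hε : ε ≠ 0) :
    ∃ K : Set (ℕ → Bool), IsCompact K ∧ K ⊆ range f ∧ μ (range f) ≤ μ K + (ε + ε) := by
  classical
  set S := range f with hS
  set Sig : (ℕ → ℕ) → ℕ → Set (ℕ → ℕ) := fun c k => {v | ∀ i < k, v i ≤ c i} with hSig
  -- step lemma
  have step : ∀ (c : ℕ → ℕ) (k : ℕ), ∃ m : ℕ,
      μ (f '' Sig c k) ≤ μ (f '' Sig (Function.update c k m) (k + 1)) + ε * 2⁻¹ ^ (k + 1) := by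
    intro c k
    have hdecomp : ∀ m : ℕ, Sig (Function.update c k m) (k + 1) = Sig c k ∩ {v | v k ≤ m} := by
      intro m
      ext v
      simp only [hSig, mem_setOf_eq, mem_inter_iff]
      constructor
      · intro hv
        refine ⟨fun i hi => ?_, ?_⟩
        · have := hv i (hi.trans (Nat.lt_succ_self k))
          rwa [Function.update_of_ne hi.ne] at this
        · have := hv k (Nat.lt_succ_self k)
          rwa [Function.update_self] at this
      · rintro ⟨h1, h2⟩ i hi
        rcases Nat.lt_succ_iff_lt_or_eq.mp hi with hi' | rfl
        · rw [Function.update_of_ne hi'.ne]; exact h1 i hi'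
        · rwa [Function.update_self]
    have hmono : Monotone fun m : ℕ => Sig c k ∩ {v | v k ≤ m} := by
      intro a b hab v hv
      exact ⟨hv.1, hv.2.trans hab⟩
    have hunion : (⋃ m : ℕ, Sig c k ∩ {v | v k ≤ m}) = Sig c k := by
      ext v
      simp only [mem_iUnion, mem_inter_iff, mem_setOf_eq]
      exact ⟨fun ⟨m, hm, _⟩ => hm, fun hv => ⟨v k, hv, le_rfl⟩⟩
    have hsup : μ (f '' Sig c k) = ⨆ m : ℕ, μ (f '' (Sig c k ∩ {v | v k ≤ m})) := by
      conv_lhs => rw [← hunion, image_iUnion]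
      exact Directed.measure_iUnion
        (Monotone.directed_le fun a b hab => image_mono (hmono hab))
    by_contra hcon
    push_neg at hcon
    have hcon' : ∀ m : ℕ, μ (f '' (Sig c k ∩ {v | v k ≤ m})) + ε * 2⁻¹ ^ (k + 1)
        ≤ μ (f '' Sig c k) := by
      intro m
      have := hcon m
      rw [hdecomp] at this
      exact this.le
    have : μ (f '' Sig c k) + ε * 2⁻¹ ^ (k + 1) ≤ μ (f '' Sig c k) := by
      nth_rewrite 1 [hsup]
      rw [ENNReal.iSup_add]
      exact iSup_le hcon'
    have hne : μ (f '' Sig c k) ≠ ⊤ := measure_ne_top μ _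
    have hpos : ε * 2⁻¹ ^ (k + 1) ≠ 0 := by
      exact mul_ne_zero hε (pow_ne_zero _ (ENNReal.inv_ne_zero.2 ENNReal.ofNat_ne_top))
    exact absurd this (not_le.mpr (ENNReal.lt_add_right hne hpos))
  -- recursive construction
  set L : ℕ → (ℕ → ℕ) := fun k =>
    Nat.rec (motive := fun _ => ℕ → ℕ) (fun _ => 0)
      (fun k Lk => Function.update Lk k (step Lk k).choose) k with hL
  have hLsucc : ∀ k, L (k + 1) = Function.update (L k) k (step (L k) k).choose := fun k => rfl
  have hLstable : ∀ i k, i < k → L k i = L (i + 1) i := by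
    intro i k hik
    induction k with
    | zero => omega
    | succ k ih =>
      rcases Nat.lt_succ_iff_lt_or_eq.mp hik with h | rfl
      · rw [hLsucc, Function.update_of_ne h.ne, ih h]
      · rfl
  set N : ℕ → ℕ := fun i => L (i + 1) i with hN
  have hNL : ∀ i k, i < k → N i = L k i := fun i k hik => (hLstable i k hik).symm
  have hSigEq : ∀ k, Sig N k = Sig (L k) k := by
    intro k
    ext v
    simp only [hSig, mem_setOf_eq]
    exact forall_congr' fun i => forall_congr' fun hi => by rw [hNL i k hi]
  -- geometric sum bound
  have geom : ∀ k : ℕ, (∑ i ∈ Finset.range k, ε * 2⁻¹ ^ (i + 1)) ≤ ε := by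
    intro k
    calc (∑ i ∈ Finset.range k, ε * 2⁻¹ ^ (i + 1)) ≤ ∑' i : ℕ, ε * 2⁻¹ ^ (i + 1) :=
          ENNReal.sum_le_tsum _
      _ = ε * (2⁻¹ * (1 - 2⁻¹)⁻¹) := by
          rw [ENNReal.tsum_mul_left]
          congr 1
          simp_rw [pow_succ']
          rw [ENNReal.tsum_mul_left, ENNReal.tsum_geometric]
      _ ≤ ε * 1 := by
          gcongr
          rw [ENNReal.one_sub_inv_two]
          exact le_of_eq (ENNReal.mul_inv_cancel (by norm_num) (by norm_num))
      _ = ε := mul_one ε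
  -- invariant
  have inv : ∀ k, μ S ≤ μ (f '' Sig (L k) k) + ∑ i ∈ Finset.range k, ε * 2⁻¹ ^ (i + 1) := by
    intro k
    induction k with
    | zero =>
      have : Sig (L 0) 0 = univ := by ext v; simp [hSig]
      rw [this, image_univ, Finset.range_zero, Finset.sum_empty, add_zero]
    | succ k ih =>
      calc μ S ≤ μ (f '' Sig (L k) k) + ∑ i ∈ Finset.range k, ε * 2⁻¹ ^ (i + 1) := ih
        _ ≤ (μ (f '' Sig (L (k+1)) (k+1)) + ε * 2⁻¹ ^ (k + 1))
              + ∑ i ∈ Finset.range k, ε * 2⁻¹ ^ (i + 1) := by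
            gcongr
            rw [hLsucc]
            exact (step (L k) k).choose_spec
        _ = μ (f '' Sig (L (k+1)) (k+1)) + ∑ i ∈ Finset.range (k+1), ε * 2⁻¹ ^ (i + 1) := by
            rw [Finset.sum_range_succ]; ring
  have main : ∀ k, μ S ≤ μ (f '' Sig N k) + ε := by
    intro k
    rw [hSigEq]
    exact (inv k).trans (by gcongr; exact geom k)
  -- compact set
  set Sinf : Set (ℕ → ℕ) := {v | ∀ i, v i ≤ N i} with hSinf
  have hSinfcomp : IsCompact Sinf := by
    have : Sinf = Set.pi univ fun i => Iic (N i) := by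
      ext v; simp [hSinf, Set.mem_pi, Pi.le_def]
    rw [this]
    exact isCompact_univ_pi fun i => (finite_Iic (N i)).isCompact
  set K : Set (ℕ → Bool) := f '' Sinf with hK
  have hKcomp : IsCompact K := hSinfcomp.image hf
  -- key open cover property
  have hopen : ∀ U : Set (ℕ → Bool), IsOpen U → K ⊆ U → ∃ k, f '' Sig N k ⊆ U := by
    intro U hU hKU
    by_contra hcon
    push_neg at hcon
    simp only [Set.not_subset] at hcon
    choose y hy hyU using hcon
    choose v hv hfv using fun k => hy k
    set w : ℕ → (ℕ → ℕ) := fun k i => min (v k i) (N i) with hw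
    have hwSinf : ∀ k, w k ∈ Sinf := fun k i => min_le_right _ _
    obtain ⟨x, hxSinf, φ, hφmono, hφtendsto⟩ := hSinfcomp.tendsto_subseq hwSinf
    have htend : Filter.Tendsto (fun j => v (φ j)) atTop (𝓝 x) := by
      rw [tendsto_pi_nhds]
      intro i
      have hwi : Filter.Tendsto (fun j => w (φ j) i) atTop (𝓝 (x i)) :=
        tendsto_pi_nhds.mp hφtendsto i
      apply hwi.congr'
      filter_upwards [Filter.eventually_ge_atTop (i + 1)] with j hj
      have hiφ : i < φ j := lt_of_lt_of_le (Nat.lt_succ_self i |>.trans_le hj) hφmono.le_apply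
      have := hv (φ j) i hiφ
      simp [hw, min_eq_left this]
    have hfU : Filter.Tendsto (fun j => f (v (φ j))) atTop (𝓝 (f x)) :=
      (hf.tendsto x).comp htend
    have hfxU : f x ∈ U := hKU ⟨x, hxSinf, rfl⟩
    have := hfU.eventually (hU.mem_nhds hfxU)
    obtain ⟨j, hj⟩ := this.exists
    rw [hfv (φ j)] at hj
    exact hyU (φ j) hj
  refine ⟨K, hKcomp, ?_, ?_⟩
  · rw [hK, hS]; exact image_subset_range _ _
  · obtain ⟨U, hKU, hUopen, hUle⟩ := Set.exists_isOpen_le_add K μ hε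
    obtain ⟨k, hk⟩ := hopen U hUopen hKU
    calc μ S ≤ μ (f '' Sig N k) + ε := main k
      _ ≤ μ U + ε := add_le_add_left (measure_mono hk) ε
      _ ≤ μ K + ε + ε := by gcongr
      _ = μ K + (ε + ε) := by ring

/-- Every analytic set is null-measurable w.r.t. a finite measure on Cantor space. -/
lemma analytic_nullmeasurable (μ : Measure (ℕ → Bool)) [IsFiniteMeasure μ]
    {S : Set (ℕ → Bool)} (hS : MeasureTheory.AnalyticSet S) :
    ∃ B : Set (ℕ → Bool), MeasurableSet B ∧ B ⊆ S ∧ μ (S \ B) = 0 := by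
  rw [MeasureTheory.AnalyticSet] at hS
  rcases hS with rfl | ⟨f, hf, rfl⟩
  · exact ⟨∅, MeasurableSet.empty, subset_rfl, by simp⟩
  have hKm : ∀ m : ℕ, ∃ K : Set (ℕ → Bool), IsCompact K ∧ K ⊆ range f ∧
      μ (range f) ≤ μ K + (((m : ℝ≥0∞) + 1)⁻¹ + ((m : ℝ≥0∞) + 1)⁻¹) := by
    intro m
    exact analytic_capacitability μ hf
      (ENNReal.inv_ne_zero.2 (by simp [ENNReal.add_eq_top]))
  choose K hKcomp hKsub hKle using hKm
  refine ⟨⋃ m, K m, MeasurableSet.iUnion fun m => (hKcomp m).isClosed.measurableSet,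
    iUnion_subset hKsub, ?_⟩
  set B := ⋃ m, K m with hB
  have hBS : B ⊆ range f := iUnion_subset hKsub
  have hμle : μ (range f) ≤ μ B := by
    have htendsto : Filter.Tendsto
        (fun m : ℕ => μ B + (((m : ℝ≥0∞) + 1)⁻¹ + ((m : ℝ≥0∞) + 1)⁻¹))
        Filter.atTop (𝓝 (μ B + (0 + 0))) := by
      refine Filter.Tendsto.add tendsto_const_nhds (Filter.Tendsto.add ?_ ?_) <;>
      · have h1 : Filter.Tendsto (fun m : ℕ => ((m : ℝ≥0∞) + 1)⁻¹) Filter.atTop (𝓝 0) := by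
          have := ENNReal.tendsto_inv_nat_nhds_zero
          have h2 : Filter.Tendsto (fun m : ℕ => m + 1) Filter.atTop Filter.atTop :=
            Filter.tendsto_add_atTop_nat 1
          refine (this.comp h2).congr fun m => ?_
          simp only [Function.comp_apply]
          push_cast
          ring
        exact h1
    rw [add_zero, add_zero] at htendsto
    refine ge_of_tendsto' htendsto fun m => ?_
    exact (hKle m).trans (add_le_add_left (measure_mono (subset_iUnion K m)) _)
  -- conclude null difference
  set T := toMeasurable μ (range f) with hT
  have hBT : B ⊆ T := hBS.trans (subset_toMeasurable μ _)
  have hdiff : μ (T \ B) = 0 := by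
    have h1 : μ (T \ B) = μ T - μ B :=
      measure_diff hBT (MeasurableSet.iUnion fun m =>
        (hKcomp m).isClosed.measurableSet).nullMeasurableSet (measure_ne_top μ B)
    rw [h1, measure_toMeasurable]
    exact tsub_eq_zero_of_le hμle
  exact measure_mono_null (diff_subset_diff_left (subset_toMeasurable μ _)) hdiff

/-- Cantor-space representation of product-measurable sets. -/
lemma exists_cantor_rep {Ω : Type*} [MeasurableSpace Ω] {n : ℕ}
    {A : Set (Ω × (Fin n → ℝ))} (hA : MeasurableSet A) :
    ∃ φ : Ω → (ℕ → Bool), Measurable φ ∧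
      ∃ B : Set ((ℕ → Bool) × (Fin n → ℝ)), MeasurableSet B ∧
        A = (fun p => (φ p.1, p.2)) ⁻¹' B := by
  classical
  have hA' : MeasurableSet[MeasurableSpace.generateFrom
      (Set.image2 (· ×ˢ ·) {s : Set Ω | MeasurableSet s}
        {t : Set (Fin n → ℝ) | MeasurableSet t})] A := by
    rwa [generateFrom_prod]
  refine MeasurableSpace.generateFrom_induction _
    (fun (A : Set (Ω × (Fin n → ℝ))) _ => ∃ φ : Ω → (ℕ → Bool), Measurable φ ∧
      ∃ B : Set ((ℕ → Bool) × (Fin n → ℝ)), MeasurableSet B ∧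
        A = (fun p => (φ p.1, p.2)) ⁻¹' B) ?_ ?_ ?_ ?_ A hA'
  · -- rectangles
    rintro t ⟨s, hs, u, hu, rfl⟩ _
    simp only [Set.mem_setOf_eq] at hs hu
    refine ⟨fun ω _ => decide (ω ∈ s), ?_, {p | p.1 0 = true} ∩ (univ ×ˢ u), ?_, ?_⟩
    · rw [measurable_pi_iff]
      intro _
      have : (fun ω => decide (ω ∈ s)) = fun ω => if ω ∈ s then true else false := by
        funext ω; by_cases h : ω ∈ s <;> simp [h]
      rw [this]
      exact Measurable.ite hs measurable_const measurable_const
    · refine MeasurableSet.inter ?_ (MeasurableSet.univ.prod hu)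
      have hm : Measurable fun p : (ℕ → Bool) × (Fin n → ℝ) => p.1 0 :=
        (measurable_pi_apply 0).comp measurable_fst
      exact hm (measurableSet_singleton true)
    · ext ⟨ω, x⟩
      by_cases h : ω ∈ s <;> simp [h, Set.mem_prod]
  · exact ⟨fun _ _ => false, measurable_const, ∅, MeasurableSet.empty, by simp⟩
  · rintro t _ ⟨φ, hφ, B, hB, rfl⟩
    exact ⟨φ, hφ, Bᶜ, hB.compl, by simp [Set.preimage_compl]⟩
  · rintro s _ hs
    choose φ hφ B hB hrep using hs
    set Φ : Ω → (ℕ → Bool) := fun ω m => φ (Nat.unpair m).1 ω (Nat.unpair m).2 with hΦ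
    have hΦm : Measurable Φ := by
      rw [measurable_pi_iff]
      intro m
      exact (measurable_pi_apply _).comp (hφ (Nat.unpair m).1)
    set r : ℕ → (ℕ → Bool) → (ℕ → Bool) := fun i c j => c (Nat.pair i j) with hr
    have hrm : ∀ i, Measurable (r i) := by
      intro i
      rw [measurable_pi_iff]
      intro j
      exact measurable_pi_apply _
    have hrφ : ∀ i ω, r i (Φ ω) = φ i ω := by
      intro i ω
      funext j
      simp [hr, hΦ, Nat.unpair_pair]
    refine ⟨Φ, hΦm, ⋃ i, (fun p => (r i p.1, p.2)) ⁻¹' B i,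
      MeasurableSet.iUnion fun i => ((hrm i).prodMap measurable_id) (hB i), ?_⟩
    rw [Set.preimage_iUnion]
    refine Set.iUnion_congr fun i => ?_
    rw [hrep i]
    ext ⟨ω, x⟩
    simp [hrφ i ω]

/-- The measurable projection theorem (case of ℝⁿ fibers) on a complete measure space. -/
theorem measurable_projection {Ω : Type*} [MeasurableSpace Ω] (P : Measure Ω)
    [IsFiniteMeasure P] [P.IsComplete] {n : ℕ}
    {A : Set (Ω × (Fin n → ℝ))} (hA : MeasurableSet A) :
    MeasurableSet (Prod.fst '' A) := by
  obtain ⟨φ, hφ, B, hB, rfl⟩ := exists_cantor_rep hA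
  have hproj : Prod.fst '' ((fun p : Ω × (Fin n → ℝ) => (φ p.1, p.2)) ⁻¹' B)
      = φ ⁻¹' (Prod.fst '' B) := by
    ext ω
    constructor
    · rintro ⟨⟨ω', x⟩, hp, rfl⟩
      exact ⟨(φ ω', x), hp, rfl⟩
    · rintro ⟨⟨c, x⟩, hc, hcx⟩
      exact ⟨(ω, x), by simpa [← hcx] using hc, rfl⟩
  rw [hproj]
  -- the projection of B is analytic
  have hAn : MeasureTheory.AnalyticSet (Prod.fst '' B) :=
    hB.analyticSet_image measurable_fst
  set μ : Measure (ℕ → Bool) := P.map φ with hμ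
  haveI : IsFiniteMeasure μ := by
    refine ⟨?_⟩
    rw [hμ, Measure.map_apply hφ MeasurableSet.univ, Set.preimage_univ]
    exact measure_lt_top P _
  obtain ⟨B₁, hB₁, hB₁sub, hnull⟩ := analytic_nullmeasurable μ hAn
  have hsplit : φ ⁻¹' (Prod.fst '' B)
      = φ ⁻¹' B₁ ∪ φ ⁻¹' (Prod.fst '' B \ B₁) := by
    rw [← Set.preimage_union, Set.union_diff_cancel' subset_rfl hB₁sub]
  rw [hsplit]
  refine (hφ hB₁).union ?_
  apply measurableSet_of_null (μ := P)
  set T := toMeasurable μ (Prod.fst '' B \ B₁) with hT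
  have hμT : μ T = 0 := by rw [hT, measure_toMeasurable]; exact hnull
  have hPT : P (φ ⁻¹' T) = 0 := by
    rw [← Measure.map_apply hφ (measurableSet_toMeasurable μ _)]
    exact hμT
  exact measure_mono_null (Set.preimage_mono (subset_toMeasurable μ _)) hPT


/-- Measurable supremum over sections of a product-measurable set,
via the measurable projection theorem on a complete probability space. -/
theorem stmt_0 {Ω : Type*} [MeasurableSpace Ω] (P : Measure Ω) [IsProbabilityMeasure P]
    [P.IsComplete] (n : ℕ)
    (h : Ω × (Fin n → ℝ) → ℝ) (hh : Measurable h)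
    (A : Set (Ω × (Fin n → ℝ))) (hA : MeasurableSet A) :
    Measurable fun ω => sSup ((fun x => (h (ω, x) : EReal)) '' {x | (ω, x) ∈ A}) := by
  refine measurable_of_Ioi fun K => ?_
  have hset : (fun ω => sSup ((fun x => (h (ω, x) : EReal)) '' {x | (ω, x) ∈ A})) ⁻¹' Set.Ioi K
      = Prod.fst '' (A ∩ {p | K < (h p : EReal)}) := by
    ext ω
    simp only [Set.mem_preimage, Set.mem_Ioi, lt_sSup_iff, Set.mem_image, Set.mem_setOf_eq]
    constructor
    · rintro ⟨b, ⟨x, hxA, rfl⟩, hKb⟩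
      exact ⟨(ω, x), ⟨hxA, hKb⟩, rfl⟩
    · rintro ⟨⟨ω', x⟩, ⟨hxA, hKb⟩, rfl⟩
      exact ⟨(h (ω', x) : EReal), ⟨x, hxA, rfl⟩, hKb⟩
  rw [hset]
  have hmeas : MeasurableSet (A ∩ {p | K < (h p : EReal)}) := by
    refine hA.inter ?_
    have : Measurable fun p : Ω × (Fin n → ℝ) => (h p : EReal) :=
      measurable_coe_real_ereal.comp hh
    exact this measurableSet_Ioi
  exact measurable_projection P hmeas
end

section
/- Let (Xⁿ)_{n≥0} be a sequence of adapted càdlàg processes of class [D] converging increasingly and pointwise to a càdlàg process X of class [D], and let Z^{Xⁿ} and Z^X denote the respective Snell envelopes, i.e., Z^Y_θ = ess sup_{τ ∈ T_θ} E[Y_τ | F_θ] for stopping times θ. Then for every stopping time θ, Z^{Xⁿ}_θ converges increasingly to Z^X_θ almost surely. -/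
open MeasureTheory Filter Topology
open scoped ENNReal

lemma meas_stopped_aux {Ω : Type*} {m0 : MeasurableSpace Ω} (ℱ : Filtration ℝ m0)
    (X : ℝ → Ω → ℝ) (hX : Adapted ℱ X)
    (hc : ∀ ω t, ContinuousWithinAt (fun s => X s ω) (Set.Ici t) t)
    (τ : Ω → ℝ) (hτ : Measurable τ) :
    Measurable fun ω => X (τ ω) ω := by
  have key : ∀ n : ℕ, Measurable fun ω => X (((⌊τ ω * 2 ^ n⌋ + 1 : ℤ) : ℝ) / 2 ^ n) ω := by
    intro n
    have hF : Measurable fun p : Ω × ℤ => X (((p.2 + 1 : ℤ) : ℝ) / 2 ^ n) p.1 := by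
      apply measurable_from_prod_countable_left
      intro k
      show Measurable fun x : Ω => X (((k + 1 : ℤ) : ℝ) / 2 ^ n) x
      exact (hX _).mono (ℱ.le _) le_rfl
    exact hF.comp (measurable_id.prodMk ((Int.measurable_floor).comp (hτ.mul_const _)))
  refine measurable_of_tendsto_metrizable key (tendsto_pi_nhds.2 fun ω => ?_)
  set r := τ ω with hr
  have h2 : ∀ n : ℕ, (0:ℝ) < 2 ^ n := fun n => by positivity
  have hge : ∀ n : ℕ, r ≤ ((⌊r * 2 ^ n⌋ + 1 : ℤ) : ℝ) / 2 ^ n := by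
    intro n
    rw [le_div_iff₀ (h2 n)]
    push_cast
    exact (Int.lt_floor_add_one (r * 2 ^ n)).le
  have hle : ∀ n : ℕ, ((⌊r * 2 ^ n⌋ + 1 : ℤ) : ℝ) / 2 ^ n ≤ r + (1 / 2) ^ n := by
    intro n
    rw [div_le_iff₀ (h2 n)]
    push_cast
    have := Int.floor_le (r * 2 ^ n)
    have h1 : ((1:ℝ) / 2) ^ n * 2 ^ n = 1 := by
      rw [← mul_pow]; norm_num
    nlinarith [h2 n]
  have htend : Tendsto (fun n : ℕ => ((⌊r * 2 ^ n⌋ + 1 : ℤ) : ℝ) / 2 ^ n) atTop (𝓝 r) := by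
    have hup : Tendsto (fun n : ℕ => r + (1 / 2 : ℝ) ^ n) atTop (𝓝 (r + 0)) :=
      tendsto_const_nhds.add (tendsto_pow_atTop_nhds_zero_of_lt_one (by norm_num) (by norm_num))
    rw [add_zero] at hup
    exact tendsto_of_tendsto_of_tendsto_of_le_of_le tendsto_const_nhds hup hge hle
  have := (hc ω r).tendsto.comp (tendsto_nhdsWithin_iff.2 ⟨htend, Eventually.of_forall hge⟩)
  exact this

lemma integrable_of_unif_aux {Ω : Type*} {m0 : MeasurableSpace Ω} {μ : Measure Ω}
    [IsProbabilityMeasure μ] {f : Ω → ℝ} (hf : Measurable f)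
    (h : ∃ (δ : ℝ) (_ : 0 < δ), ∀ s, MeasurableSet s → μ s ≤ ENNReal.ofReal δ →
      eLpNorm (s.indicator f) 1 μ ≤ ENNReal.ofReal 1) :
    Integrable f μ := by
  obtain ⟨δ, hδ, hδ'⟩ := h
  set s : ℕ → Set Ω := fun c => {ω | (c : ℝ) ≤ |f ω|} with hs
  have hsm : ∀ c, MeasurableSet (s c) := fun c =>
    measurableSet_le measurable_const hf.abs
  have hanti : Antitone s := fun c d hcd ω hω => by
    simp only [hs, Set.mem_setOf_eq] at hω ⊢
    exact le_trans (by exact_mod_cast hcd) hω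
  have hiInter : ⋂ c, s c = ∅ := by
    ext ω
    simp only [Set.mem_iInter, Set.mem_empty_iff_false, iff_false, not_forall]
    obtain ⟨c, hc⟩ := exists_nat_gt |f ω|
    exact ⟨c, by simpa [hs] using hc⟩
  have htend : Tendsto (μ ∘ s) atTop (𝓝 0) := by
    have := tendsto_measure_iInter_atTop (μ := μ) (fun c => (hsm c).nullMeasurableSet)
      hanti ⟨0, measure_ne_top μ _⟩
    rwa [hiInter, measure_empty] at this
  obtain ⟨c, hc⟩ : ∃ c : ℕ, μ (s c) ≤ ENNReal.ofReal δ := by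
    have hpos : (0:ℝ≥0∞) < ENNReal.ofReal δ := ENNReal.ofReal_pos.2 hδ
    obtain ⟨c, hc⟩ := (htend.eventually_lt_const hpos).exists
    exact ⟨c, hc.le⟩
  rw [← memLp_one_iff_integrable]
  refine ⟨hf.aestronglyMeasurable, ?_⟩
  have hsplit : f = (s c).indicator f + (s c)ᶜ.indicator f := (Set.indicator_self_add_compl (s c) f).symm
  calc eLpNorm f 1 μ = eLpNorm ((s c).indicator f + (s c)ᶜ.indicator f) 1 μ := by rw [← hsplit]
    _ ≤ eLpNorm ((s c).indicator f) 1 μ + eLpNorm ((s c)ᶜ.indicator f) 1 μ :=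
        eLpNorm_add_le ((hf.indicator (hsm c)).aestronglyMeasurable)
          ((hf.indicator (hsm c).compl).aestronglyMeasurable) le_rfl
    _ ≤ ENNReal.ofReal 1 + eLpNorm ((s c)ᶜ.indicator f) 1 μ := by
        gcongr
        exact hδ' _ (hsm c) hc
    _ < ⊤ := by
        have hb : ∀ᵐ ω ∂μ, ‖(s c)ᶜ.indicator f ω‖ ≤ (c : ℝ) := by
          refine Eventually.of_forall fun ω => ?_
          by_cases hω : ω ∈ (s c)ᶜ
          · rw [Set.indicator_of_mem hω]
            exact le_of_lt (by simpa [hs] using hω)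
          · rw [Set.indicator_of_notMem hω]; simp
        have := eLpNorm_le_of_ae_bound (p := 1) (μ := μ) hb
        refine ENNReal.add_lt_top.2 ⟨by simp, lt_of_le_of_lt this ?_⟩
        simp only [measure_univ]
        exact lt_of_le_of_lt (le_of_eq (by simp)) (by simp : ENNReal.ofReal c < ⊤)

/-- Monotone convergence of Snell envelopes: if càdlàg class-[D] processes `Xn` increase
pointwise to `X`, then their Snell envelopes (characterized as the least a.s. upper bounds of
the conditional expectations at later stopping times) increase a.s. to the Snell envelope
of `X`, at every stopping time. -/
theorem stmt_7 {Ω : Type*} {m0 : MeasurableSpace Ω} {μ : Measure Ω} [IsProbabilityMeasure μ]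
    (T : ℝ) (ℱ : Filtration ℝ m0)
    (Xn : ℕ → ℝ → Ω → ℝ) (X : ℝ → Ω → ℝ)
    (Zn : ℕ → (Ω → ℝ) → Ω → ℝ) (Z : (Ω → ℝ) → Ω → ℝ)
    (hXnadapted : ∀ n, Adapted ℱ (Xn n)) (hXadapted : Adapted ℱ X)
    (hXncadlag : ∀ n ω t, ContinuousWithinAt (fun s => Xn n s ω) (Set.Ici t) t)
    (hXcadlag : ∀ ω t, ContinuousWithinAt (fun s => X s ω) (Set.Ici t) t)
    (hXnD : ∀ n, UnifIntegrable
      (fun τ : {τ : Ω → ℝ // IsStoppingTime ℱ (fun ω => (τ ω : WithTop ℝ)) ∧ ∀ ω, τ ω ∈ Set.Icc 0 T} =>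
        fun ω => Xn n (τ.1 ω) ω) 1 μ)
    (hXD : UnifIntegrable
      (fun τ : {τ : Ω → ℝ // IsStoppingTime ℱ (fun ω => (τ ω : WithTop ℝ)) ∧ ∀ ω, τ ω ∈ Set.Icc 0 T} =>
        fun ω => X (τ.1 ω) ω) 1 μ)
    (hmono : ∀ t ω, Monotone fun n => Xn n t ω)
    (hlim : ∀ t ω, Tendsto (fun n => Xn n t ω) atTop (𝓝 (X t ω)))
    (hZn : ∀ n (θ : Ω → ℝ) (hθ : IsStoppingTime ℱ (fun ω => (θ ω : WithTop ℝ))), (∀ ω, θ ω ∈ Set.Icc 0 T) →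
      (∀ τ : Ω → ℝ, IsStoppingTime ℱ (fun ω => (τ ω : WithTop ℝ)) → (∀ ω, θ ω ≤ τ ω ∧ τ ω ≤ T) →
        μ[(fun ω => Xn n (τ ω) ω) | hθ.measurableSpace] ≤ᵐ[μ] Zn n θ) ∧
      (∀ W : Ω → ℝ,
        (∀ τ : Ω → ℝ, IsStoppingTime ℱ (fun ω => (τ ω : WithTop ℝ)) → (∀ ω, θ ω ≤ τ ω ∧ τ ω ≤ T) →
          μ[(fun ω => Xn n (τ ω) ω) | hθ.measurableSpace] ≤ᵐ[μ] W) →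
        Zn n θ ≤ᵐ[μ] W))
    (hZ : ∀ (θ : Ω → ℝ) (hθ : IsStoppingTime ℱ (fun ω => (θ ω : WithTop ℝ))), (∀ ω, θ ω ∈ Set.Icc 0 T) →
      (∀ τ : Ω → ℝ, IsStoppingTime ℱ (fun ω => (τ ω : WithTop ℝ)) → (∀ ω, θ ω ≤ τ ω ∧ τ ω ≤ T) →
        μ[(fun ω => X (τ ω) ω) | hθ.measurableSpace] ≤ᵐ[μ] Z θ) ∧
      (∀ W : Ω → ℝ,
        (∀ τ : Ω → ℝ, IsStoppingTime ℱ (fun ω => (τ ω : WithTop ℝ)) → (∀ ω, θ ω ≤ τ ω ∧ τ ω ≤ T) →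
          μ[(fun ω => X (τ ω) ω) | hθ.measurableSpace] ≤ᵐ[μ] W) →
        Z θ ≤ᵐ[μ] W)) :
    ∀ (θ : Ω → ℝ), IsStoppingTime ℱ (fun ω => (θ ω : WithTop ℝ)) → (∀ ω, θ ω ∈ Set.Icc 0 T) →
      ∀ᵐ ω ∂μ, (Monotone fun n => Zn n θ ω) ∧
        Tendsto (fun n => Zn n θ ω) atTop (𝓝 (Z θ ω)) := by
  intro θ hθ hθI
  have hm : hθ.measurableSpace ≤ m0 := hθ.measurableSpace_le
  haveI : SigmaFinite (μ.trim hm) := inferInstance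
  have hint : ∀ (τ : Ω → ℝ), IsStoppingTime ℱ (fun ω => (τ ω : WithTop ℝ)) → (∀ ω, θ ω ≤ τ ω ∧ τ ω ≤ T) →
      (∀ n, Integrable (fun ω => Xn n (τ ω) ω) μ) ∧ Integrable (fun ω => X (τ ω) ω) μ := by
    intro τ hτ hτI
    have hIcc : ∀ ω, τ ω ∈ Set.Icc 0 T := fun ω => ⟨(hθI ω).1.trans (hτI ω).1, (hτI ω).2⟩
    have hτm : Measurable τ := by
      have h := (WithTop.measurable_untopA (ι := ℝ)).comp (hτ.measurable.mono hτ.measurableSpace_le le_rfl)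
      simpa [Function.comp_def] using h
    constructor
    · intro n
      refine integrable_of_unif_aux
        (meas_stopped_aux ℱ (Xn n) (hXnadapted n) (hXncadlag n) τ hτm) ?_
      obtain ⟨δ, hδ, hδ'⟩ := hXnD n one_pos
      exact ⟨δ, hδ, fun s hs hμs => hδ' ⟨τ, hτ, hIcc⟩ s hs hμs⟩
    · refine integrable_of_unif_aux (meas_stopped_aux ℱ X hXadapted hXcadlag τ hτm) ?_
      obtain ⟨δ, hδ, hδ'⟩ := hXD one_pos
      exact ⟨δ, hδ, fun s hs hμs => hδ' ⟨τ, hτ, hIcc⟩ s hs hμs⟩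
  have hstep : ∀ n, Zn n θ ≤ᵐ[μ] Zn (n + 1) θ := by
    intro n
    refine (hZn n θ hθ hθI).2 (Zn (n + 1) θ) fun τ hτ hτI => ?_
    exact (condExp_mono ((hint τ hτ hτI).1 n) ((hint τ hτ hτI).1 (n + 1))
      (Eventually.of_forall fun ω => hmono (τ ω) ω (Nat.le_succ n))).trans
      ((hZn (n + 1) θ hθ hθI).1 τ hτ hτI)
  have hbd : ∀ n, Zn n θ ≤ᵐ[μ] Z θ := by
    intro n
    refine (hZn n θ hθ hθI).2 (Z θ) fun τ hτ hτI => ?_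
    exact (condExp_mono ((hint τ hτ hτI).1 n) (hint τ hτ hτI).2
      (Eventually.of_forall fun ω => (hmono (τ ω) ω).ge_of_tendsto (hlim (τ ω) ω) n)).trans
      ((hZ θ hθ hθI).1 τ hτ hτI)
  set W : Ω → ℝ := fun ω => ⨆ n, Zn n θ ω with hW
  have hZleW : Z θ ≤ᵐ[μ] W := by
    refine (hZ θ hθ hθI).2 W fun τ hτ hτI => ?_
    set g : ℕ → Ω → ℝ := fun n => μ[(fun ω => Xn n (τ ω) ω)|hθ.measurableSpace] with hg
    set gX : Ω → ℝ := μ[(fun ω => X (τ ω) ω)|hθ.measurableSpace] with hgX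
    have hgmono : ∀ᵐ ω ∂μ, ∀ n, g n ω ≤ g (n + 1) ω :=
      ae_all_iff.2 fun n => condExp_mono ((hint τ hτ hτI).1 n) ((hint τ hτ hτI).1 (n + 1))
        (Eventually.of_forall fun ω => hmono (τ ω) ω (Nat.le_succ n))
    have hgle : ∀ᵐ ω ∂μ, ∀ n, g n ω ≤ gX ω :=
      ae_all_iff.2 fun n => condExp_mono ((hint τ hτ hτI).1 n) (hint τ hτ hτI).2
        (Eventually.of_forall fun ω => (hmono (τ ω) ω).ge_of_tendsto (hlim (τ ω) ω) n)
    set G : Ω → ℝ := fun ω => ⨆ n, g n ω with hG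
    have hGmeas : Measurable G :=
      Measurable.iSup fun n => (stronglyMeasurable_condExp.mono hm).measurable
    have haek : ∀ᵐ ω ∂μ, Monotone (fun n => g n ω) ∧ BddAbove (Set.range fun n => g n ω) := by
      filter_upwards [hgmono, hgle] with ω h1 h2
      exact ⟨monotone_nat_of_le_succ h1, ⟨gX ω, Set.forall_mem_range.2 h2⟩⟩
    have hGtend : ∀ᵐ ω ∂μ, Tendsto (fun n => g n ω) atTop (𝓝 (G ω)) := by
      filter_upwards [haek] with ω hω
      exact tendsto_atTop_ciSup hω.1 hω.2
    have hGleX : ∀ᵐ ω ∂μ, G ω ≤ gX ω := by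
      filter_upwards [hgle] with ω hω
      exact ciSup_le hω
    have hgint : ∀ n, Integrable (g n) μ := fun n => by rw [hg]; exact integrable_condExp
    have hgXi : Integrable gX μ := by rw [hgX]; exact integrable_condExp
    have hGint : Integrable G μ := by
      refine Integrable.mono' ((hgint 0).abs.add hgXi.abs)
        hGmeas.aestronglyMeasurable ?_
      filter_upwards [haek, hGleX] with ω hω hle2
      have h1 : g 0 ω ≤ G ω := le_ciSup hω.2 0
      rw [Real.norm_eq_abs, abs_le]
      refine ⟨?_, ?_⟩
      · have := neg_abs_le (g 0 ω)
        have := abs_nonneg (gX ω)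
        simp only [Pi.add_apply, Pi.abs_apply]
        linarith
      · have := le_abs_self (gX ω)
        have := abs_nonneg (g 0 ω)
        simp only [Pi.add_apply, Pi.abs_apply]
        linarith
    have hIa : Tendsto (fun n => ∫ ω, Xn n (τ ω) ω ∂μ) atTop (𝓝 (∫ ω, X (τ ω) ω ∂μ)) :=
      integral_tendsto_of_tendsto_of_monotone (fun n => (hint τ hτ hτI).1 n) (hint τ hτ hτI).2
        (Eventually.of_forall fun ω => fun a b hab => hmono (τ ω) ω hab)
        (Eventually.of_forall fun ω => hlim (τ ω) ω)
    have hIb : Tendsto (fun n => ∫ ω, g n ω ∂μ) atTop (𝓝 (∫ ω, G ω ∂μ)) :=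
      integral_tendsto_of_tendsto_of_monotone hgint hGint
        (haek.mono fun ω hω => hω.1) hGtend
    have heq : ∀ n, ∫ ω, g n ω ∂μ = ∫ ω, Xn n (τ ω) ω ∂μ := fun n => by
      rw [hg]; exact integral_condExp hm
    have hGeq : ∫ ω, G ω ∂μ = ∫ ω, gX ω ∂μ := by
      have h1 : Tendsto (fun n => ∫ ω, g n ω ∂μ) atTop (𝓝 (∫ ω, X (τ ω) ω ∂μ)) := by
        simp only [heq]; exact hIa
      rw [tendsto_nhds_unique hIb h1, hgX, integral_condExp hm]
    have hXeq : gX =ᵐ[μ] G := by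
      have hnn : 0 ≤ᵐ[μ] fun ω => gX ω - G ω := by
        filter_upwards [hGleX] with ω h
        simpa using sub_nonneg.2 h
      have hintsub : Integrable (fun ω => gX ω - G ω) μ := hgXi.sub hGint
      have hzero : ∫ ω, (gX ω - G ω) ∂μ = 0 := by
        rw [integral_sub hgXi hGint, hGeq]; ring
      have h0 := (integral_eq_zero_iff_of_nonneg_ae hnn hintsub).1 hzero
      filter_upwards [h0] with ω hω
      have : gX ω - G ω = 0 := hω
      linarith
    have hGW : ∀ᵐ ω ∂μ, G ω ≤ W ω := by
      have hZnW : ∀ᵐ ω ∂μ, ∀ n, Zn n θ ω ≤ W ω := by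
        filter_upwards [ae_all_iff.2 hbd] with ω hω n
        exact le_ciSup ⟨Z θ ω, Set.forall_mem_range.2 hω⟩ n
      have hgZn : ∀ᵐ ω ∂μ, ∀ n, g n ω ≤ Zn n θ ω :=
        ae_all_iff.2 fun n => (hZn n θ hθ hθI).1 τ hτ hτI
      filter_upwards [hZnW, hgZn] with ω h1 h2
      exact ciSup_le fun n => (h2 n).trans (h1 n)
    filter_upwards [hXeq, hGW] with ω h1 h2
    exact h1.le.trans h2
  filter_upwards [ae_all_iff.2 hbd, ae_all_iff.2 hstep, hZleW] with ω h1 h2 h3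
  have hmon : Monotone fun n => Zn n θ ω := monotone_nat_of_le_succ h2
  refine ⟨hmon, ?_⟩
  have hbdd : BddAbove (Set.range fun n => Zn n θ ω) := ⟨Z θ ω, Set.forall_mem_range.2 h1⟩
  have ht := tendsto_atTop_ciSup hmon hbdd
  have hWe : W ω = Z θ ω := le_antisymm (ciSup_le h1) h3
  rw [← hWe]
  exact ht
end
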